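/- Let E be a complex vector space, F a separating subspace of the conjugate algebraic dual of E, H a Hilbert space, and T : E → H a weakly continuous linear operator. A vector y ∈ F belongs to the range of the adjoint T* : H → F if and only if there exists a constant m ≥ 0 such that |⟨y, x⟩|² ≤ m ‖Tx‖² for all x ∈ E. -/

import Mathlib

/-- **Range of the adjoint operator** (Lemma 2.3). `p` is the anti-duality pairing of the
anti-dual pair ⟨F, E⟩ (linear in the `F`-variable, conjugate-linear in the `E`-variable),
separating the points of `E` and `F`. `T : E → H` is a weakly continuous linear operator into
a Hilbert space, encoded together with its adjoint `Tadj : H → F` via the defining identity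
`⟨T* h, x⟩ = ⟪T x, h⟫`. A vector `y ∈ F` lies in the range of `T*` iff
`|⟨y, x⟩|² ≤ m ‖T x‖²` for some constant `m ≥ 0` and all `x ∈ E`. -/
theorem stmt_1
    {E F : Type*} [AddCommGroup E] [Module ℂ E] [AddCommGroup F] [Module ℂ F]
    (p : F →ₗ[ℂ] E →ₗ⋆[ℂ] ℂ)
    (hsepE : ∀ x : E, (∀ f : F, p f x = 0) → x = 0)
    (hsepF : ∀ f : F, (∀ x : E, p f x = 0) → f = 0)
    {H : Type*} [NormedAddCommGroup H] [InnerProductSpace ℂ H] [CompleteSpace H]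
    (T : E →ₗ[ℂ] H) (Tadj : H →ₗ[ℂ] F)
    (hadj : ∀ (h : H) (x : E), p (Tadj h) x = @inner ℂ _ _ (T x) h)
    (y : F) :
    y ∈ Set.range Tadj ↔
      ∃ m : ℝ, 0 ≤ m ∧ ∀ x : E, ‖p y x‖ ^ 2 ≤ m * ‖T x‖ ^ 2 := by
  constructor
  · rintro ⟨h, rfl⟩
    refine ⟨‖h‖ ^ 2, by positivity, fun x => ?_⟩
    have := norm_inner_le_norm (𝕜 := ℂ) (T x) h
    calc ‖p (Tadj h) x‖ ^ 2
        = ‖(inner ℂ (T x) h : ℂ)‖ ^ 2 := by rw [hadj]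
      _ ≤ (‖T x‖ * ‖h‖) ^ 2 := by
          apply pow_le_pow_left₀ (norm_nonneg _) this
      _ = ‖h‖ ^ 2 * ‖T x‖ ^ 2 := by ring
  · rintro ⟨m, hm, hbound⟩
    -- the linearized functional x ↦ conj (p y x)
    set g : E →ₗ[ℂ] ℂ :=
      { toFun := fun x => starRingEnd ℂ (p y x)
        map_add' := fun a b => by simp
        map_smul' := fun c a => by simp } with hg
    have hker : LinearMap.ker T ≤ LinearMap.ker g := by
      intro x hx
      have hx' : T x = 0 := hx
      have := hbound x
      rw [hx'] at this
      simp only [norm_zero] at this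
      have h0 : ‖p y x‖ = 0 := by nlinarith [norm_nonneg ((p y) x)]
      have h0' : (p y) x = 0 := norm_eq_zero.mp h0
      exact LinearMap.mem_ker.mpr (by simp [hg, h0'])
    set q : (E ⧸ LinearMap.ker T) →ₗ[ℂ] ℂ := (LinearMap.ker T).liftQ g hker with hq
    set φ : ↥(LinearMap.range T) →ₗ[ℂ] ℂ :=
      q.comp T.quotKerEquivRange.symm.toLinearMap with hφ
    have hφT : ∀ x : E, ∀ hmem, φ ⟨T x, hmem⟩ = starRingEnd ℂ (p y x) := by
      intro x hmem
      have : (⟨T x, hmem⟩ : ↥(LinearMap.range T)) =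
          T.quotKerEquivRange (Submodule.Quotient.mk x) := by
        ext; simp [LinearMap.quotKerEquivRange]
      simp only [hφ, LinearMap.comp_apply, this, LinearEquiv.coe_toLinearMap,
        LinearEquiv.symm_apply_apply]
      simp [hq, hg]
    have hφbound : ∀ v : ↥(LinearMap.range T), ‖φ v‖ ≤ Real.sqrt m * ‖v‖ := by
      rintro ⟨v, hv⟩
      obtain ⟨x, rfl⟩ := hv
      rw [hφT x ⟨x, rfl⟩]
      have h1 : ‖starRingEnd ℂ (p y x)‖ = ‖p y x‖ := by
        simp
      rw [h1]
      have h2 : ‖p y x‖ ^ 2 ≤ (Real.sqrt m * ‖T x‖) ^ 2 := by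
        rw [mul_pow, Real.sq_sqrt hm]; exact hbound x
      have hnorm : ‖(⟨T x, ⟨x, rfl⟩⟩ : ↥(LinearMap.range T))‖ = ‖T x‖ := rfl
      rw [hnorm]
      calc ‖p y x‖
          = Real.sqrt (‖p y x‖ ^ 2) := (Real.sqrt_sq (norm_nonneg _)).symm
        _ ≤ Real.sqrt ((Real.sqrt m * ‖T x‖) ^ 2) := Real.sqrt_le_sqrt h2
        _ = Real.sqrt m * ‖T x‖ := Real.sqrt_sq (by positivity)
    set φc : ↥(LinearMap.range T) →L[ℂ] ℂ := φ.mkContinuous (Real.sqrt m) hφbound with hφc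
    obtain ⟨Φ, hΦ, -⟩ := exists_extension_norm_eq (LinearMap.range T) φc
    set h : H := (InnerProductSpace.toDual ℂ H).symm Φ with hh
    have hinner : ∀ v : H, (inner ℂ h v : ℂ) = Φ v := fun v =>
      InnerProductSpace.toDual_symm_apply
    have key : ∀ x : E, p (Tadj h) x = p y x := by
      intro x
      rw [hadj]
      have h1 : (inner ℂ (T x) h : ℂ) = starRingEnd ℂ (inner ℂ h (T x)) := by
        rw [← inner_conj_symm]
      rw [h1, hinner]
      have h2 : Φ (T x) = φc ⟨T x, LinearMap.mem_range_self T x⟩ :=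
        hΦ ⟨T x, LinearMap.mem_range_self T x⟩
      rw [h2]
      have h3 : φc ⟨T x, LinearMap.mem_range_self T x⟩ = starRingEnd ℂ (p y x) :=
        hφT x _
      rw [h3]; exact Complex.conj_conj _
    refine ⟨h, ?_⟩
    have : y - Tadj h = 0 := by
      apply hsepF
      intro x
      simp [map_sub, key x]
    have := sub_eq_zero.mp this
    exact this.symm
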